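/- If z is an extreme point of S_α^m different from every standard basis vector, then z does not have two coordinates with nonzero imaginary parts of the same sign. -/

import Mathlib

noncomputable def payoff {m n : ℕ} (A : Matrix (Fin m) (Fin n) ℂ)
    (z : Fin m → ℂ) (w : Fin n → ℂ) : ℝ :=
  (∑ i, ∑ j, (starRingEnd ℂ) (z i) * A i j * w j).re

def Sarg (m : ℕ) (α : ℝ) : Set (Fin m → ℂ) :=
  {z | (∀ i, 0 ≤ (z i).re ∧ |(z i).im| ≤ Real.tan α * (z i).re) ∧ ∑ i, z i = 1}


/-- A nontrivial extreme point of S_α^m has no two coordinates with nonzero imaginary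
parts of the same sign. -/
theorem extreme_point_no_same_sign (m : ℕ) (α₀ : ℝ)
    (hα : α₀ ∈ Set.Ioo 0 (Real.pi / 2))
    (z : Fin m → ℂ) (hz : z ∈ Set.extremePoints ℝ (Sarg m α₀))
    (hne : ∀ k : Fin m, z ≠ fun j => if j = k then (1 : ℂ) else 0) :
    ¬ ∃ i j : Fin m, i ≠ j ∧
      ((0 < (z i).im ∧ 0 < (z j).im) ∨ ((z i).im < 0 ∧ (z j).im < 0)) := by
  rintro ⟨i, j, hij, hsign⟩
  obtain ⟨⟨hcone, hsum⟩, hext⟩ := hz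
  set t := Real.tan α₀ with ht
  have ht0 : 0 < t := Real.tan_pos_of_pos_of_lt_pi_div_two hα.1 hα.2
  obtain ⟨s, hs, hi, hj⟩ : ∃ s : ℝ, (s = 1 ∨ s = -1) ∧
      0 < s * (z i).im ∧ 0 < s * (z j).im := by
    rcases hsign with ⟨h1, h2⟩ | ⟨h1, h2⟩
    · exact ⟨1, Or.inl rfl, by simpa, by simpa⟩
    · refine ⟨-1, Or.inr rfl, ?_, ?_⟩ <;> rw [neg_one_mul] <;>
        [exact neg_pos.mpr h1; exact neg_pos.mpr h2]
  have hsabs : ∀ x : ℝ, 0 ≤ s * x → |x| = s * x := by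
    intro x hx
    rcases hs with rfl | rfl
    · rw [one_mul] at hx ⊢; exact abs_of_nonneg hx
    · rw [neg_one_mul] at hx ⊢; exact abs_of_nonpos (by linarith)
  have hsle : ∀ x : ℝ, s * x ≤ |x| := by
    intro x
    rcases hs with rfl | rfl
    · rw [one_mul]; exact le_abs_self x
    · rw [neg_one_mul]; exact neg_le_abs x
  have hrei : 0 < (z i).re := by
    have h1 := (hcone i).2
    have h2 := hsle (z i).im
    nlinarith
  have hrej : 0 < (z j).re := by
    have h1 := (hcone j).2
    have h2 := hsle (z j).im
    nlinarith
  set ε : ℝ := min (min (z i).re (z j).re)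
      (min (s * (z i).im) (s * (z j).im) / t) with hε
  have hε0 : 0 < ε :=
    lt_min (lt_min hrei hrej) (div_pos (lt_min hi hj) ht0)
  have hεi : ε ≤ (z i).re := le_trans (min_le_left _ _) (min_le_left _ _)
  have hεj : ε ≤ (z j).re := le_trans (min_le_left _ _) (min_le_right _ _)
  have hεti : ε * t ≤ s * (z i).im := by
    have h1 : ε ≤ s * (z i).im / t :=
      le_trans (min_le_right _ _) (by gcongr; exact min_le_left _ _)
    calc ε * t ≤ (s * (z i).im / t) * t := by nlinarith
      _ = s * (z i).im := by field_simp
  have hεtj : ε * t ≤ s * (z j).im := by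
    have h1 : ε ≤ s * (z j).im / t :=
      le_trans (min_le_right _ _) (by gcongr; exact min_le_right _ _)
    calc ε * t ≤ (s * (z j).im / t) * t := by nlinarith
      _ = s * (z j).im := by field_simp
  have hss : s * s = 1 := by rcases hs with rfl | rfl <;> ring
  set e : ℂ := ⟨ε, ε * (s * t)⟩ with he
  -- the key cone-stability lemma
  have key : ∀ c : ℂ, |c.im| ≤ t * c.re → ε ≤ c.re → ε * t ≤ s * c.im →
      ((0 ≤ (c + e).re ∧ |(c + e).im| ≤ t * (c + e).re) ∧
       (0 ≤ (c - e).re ∧ |(c - e).im| ≤ t * (c - e).re)) := by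
    intro c h1 h2 h3
    have hsim : s * c.im ≤ t * c.re := le_trans (hsle c.im) h1
    have hre1 : (c + e).re = c.re + ε := by simp [he, Complex.add_re]
    have him1 : (c + e).im = c.im + ε * (s * t) := by simp [he, Complex.add_im]
    have hre2 : (c - e).re = c.re - ε := by simp [he, Complex.sub_re]
    have him2 : (c - e).im = c.im - ε * (s * t) := by simp [he, Complex.sub_im]
    have hp1 : 0 ≤ s * (c.im + ε * (s * t)) := by nlinarith
    have hp2 : 0 ≤ s * (c.im - ε * (s * t)) := by nlinarith
    refine ⟨⟨by rw [hre1]; linarith, ?_⟩, ⟨by rw [hre2]; linarith, ?_⟩⟩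
    · rw [hre1, him1, hsabs _ hp1]; nlinarith
    · rw [hre2, him2, hsabs _ hp2]; nlinarith
  set d : Fin m → ℂ := fun k => if k = i then e else if k = j then -e else 0 with hd
  have hdsum : ∑ k, d k = 0 := by
    have hfun : ∀ k, d k = (if k = i then e else 0) + (if k = j then -e else 0) := by
      intro k
      by_cases h1 : k = i
      · subst h1
        simp [hd, if_neg hij]
      · by_cases h2 : k = j <;> simp [hd, h1, h2, (Ne.symm hij : j ≠ i)]
    simp only [hfun, Finset.sum_add_distrib, Finset.sum_ite_eq', Finset.mem_univ, if_true]
    ring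
  -- membership of the two perturbations
  have hxS : (fun k => z k + d k) ∈ Sarg m α₀ := by
    constructor
    · intro k
      by_cases h1 : k = i
      · subst h1
        simpa [hd] using (key (z k) (hcone k).2 hεi hεti).1
      · by_cases h2 : k = j
        · subst h2
          have := (key (z k) (hcone k).2 hεj hεtj).2
          simpa [hd, h1, sub_eq_add_neg] using this
        · simpa [hd, h1, h2] using hcone k
    · simp only [Finset.sum_add_distrib, hsum, hdsum, add_zero]
  have hyS : (fun k => z k - d k) ∈ Sarg m α₀ := by
    constructor
    · intro k
      by_cases h1 : k = i
      · subst h1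
        have := (key (z k) (hcone k).2 hεi hεti).2
        simpa [hd] using this
      · by_cases h2 : k = j
        · subst h2
          have := (key (z k) (hcone k).2 hεj hεtj).1
          simpa [hd, h1, sub_neg_eq_add] using this
        · simpa [hd, h1, h2] using hcone k
    · simp only [Finset.sum_sub_distrib, hsum, hdsum, sub_zero]
  have hmid : z ∈ openSegment ℝ (fun k => z k + d k) (fun k => z k - d k) := by
    refine ⟨1/2, 1/2, one_half_pos, one_half_pos, by norm_num, ?_⟩
    funext k
    show (1/2 : ℝ) • (z k + d k) + (1/2 : ℝ) • (z k - d k) = z k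
    module
  have hcontr := hext hxS hyS hmid
  have := congrFun hcontr i
  simp only [hd, if_pos rfl] at this
  have : e = 0 := by
    have h := congrArg (fun w => w - z i) this
    simpa [add_sub_cancel_left] using h
  have : (0 : ℝ) = ε := by
    have := congrArg Complex.re this
    simpa [he] using this.symm
  linarith
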